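/- Under the Tajima coalescent jump chain, the probability of a complete realization g^T equals 2^(n − c(g) − 1)/(n−1)!, where c(g) is the number of coalescent events joining two singletons (cherries created from two singletons). -/

import Mathlib

/-- A complete realization of the jump chain of Tajima's coalescent on `n` individuals:
for `i = n` down to `1`, the state `(α i, β i)` records the number of singletons `α i` and
the set of extant vintage labels `β i` when there are `i = α i + |β i|` lineages.  The
chain starts at `(n, ∅)`; at the step from `i` to `i - 1` lineages either two singletons
merge into the new vintage `i - 1`, or a singleton merges with an extant vintage, or two
distinct extant vintages merge. -/
def IsTajimaChain (n : ℕ) (α : ℕ → ℕ) (β : ℕ → Finset ℕ) : Prop :=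
  α n = n ∧ β n = ∅ ∧
  (∀ i, 1 ≤ i → i ≤ n → α i + (β i).card = i) ∧
  ∀ i, 2 ≤ i → i ≤ n →
    ((α (i - 1) + 2 = α i ∧ β (i - 1) = insert (i - 1) (β i)) ∨
     (α (i - 1) + 1 = α i ∧ ∃ v ∈ β i, β (i - 1) = insert (i - 1) (β i \ {v})) ∨
     (α (i - 1) = α i ∧ ∃ v ∈ β i, ∃ w ∈ β i, v ≠ w ∧
        β (i - 1) = insert (i - 1) (β i \ {v, w})))

/-- The product of the binomial denominators `C(i,2)` for `i = 2, …, n`. -/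
lemma tajima_den_prod (n : ℕ) (hn : 1 ≤ n) :
    (∏ i ∈ Finset.Icc 2 n, (Nat.choose i 2)) * 2 ^ (n - 1) =
      Nat.factorial n * Nat.factorial (n - 1) := by
  induction n, hn using Nat.le_induction with
  | base => simp
  | succ m hm ih =>
    rw [Finset.prod_Icc_succ_top (by omega)]
    have h1 : m + 1 - 1 = m := by omega
    have h2 : m - 1 + 1 = m := by omega
    rw [h1, show m = m - 1 + 1 from h2.symm, pow_succ, h2]
    have he : 2 ∣ (m + 1) * m := by
      rcases Nat.even_mul_succ_self m with ⟨k, hk⟩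
      exact ⟨k, by rw [mul_comm]; omega⟩
    have hc : (m + 1).choose 2 * 2 = (m + 1) * m := by
      rw [Nat.choose_two_right, h1, Nat.div_mul_cancel he]
    calc (∏ i ∈ Finset.Icc 2 m, i.choose 2) * ((m+1).choose 2) * (2 ^ (m-1) * 2)
        = ((∏ i ∈ Finset.Icc 2 m, i.choose 2) * 2 ^ (m-1)) * ((m+1).choose 2 * 2) := by ring
      _ = (Nat.factorial m * Nat.factorial (m - 1)) * ((m+1) * m) := by rw [ih, hc]
      _ = Nat.factorial (m+1) * Nat.factorial m := by
          rw [Nat.factorial_succ, ← Nat.mul_factorial_pred (show m ≠ 0 by omega)]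
          ring

/-- The product of the binomial numerators along a Tajima chain. -/
lemma tajima_num_prod (n : ℕ) (α : ℕ → ℕ) (β : ℕ → Finset ℕ) (h : IsTajimaChain n α β) :
    ∀ m, 1 ≤ m → m ≤ n →
    (∏ i ∈ Finset.Icc 2 m, (α i).choose (α i - α (i - 1))) *
      2 ^ ((Finset.Icc 2 m).filter (fun i => α (i - 1) + 2 = α i)).card *
      (α 1).factorial = (α m).factorial := by
  intro m hm1
  induction m, hm1 using Nat.le_induction with
  | base => intro _; simp [Finset.Icc_eq_empty (show ¬ (2:ℕ) ≤ 1 by omega)]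
  | succ m hm ih =>
    intro hmn
    have ih' := ih (by omega)
    have hI : Finset.Icc 2 (m+1) = insert (m+1) (Finset.Icc 2 m) := by
      exact (Finset.insert_Icc_right_eq_Icc_add_one (by omega)).symm
    have hnot : m + 1 ∉ Finset.Icc 2 m := by simp
    have hstep := h.2.2.2 (m+1) (by omega) hmn
    simp only [Nat.add_sub_cancel] at hstep
    rw [hI, Finset.prod_insert hnot, Finset.filter_insert]
    simp only [Nat.add_sub_cancel]
    rcases hstep with ⟨hα, -⟩ | ⟨hα, -⟩ | ⟨hα, -⟩
    · rw [if_pos hα, Finset.card_insert_of_notMem (by simp [hnot]), ← hα,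
        Nat.add_sub_cancel_left, pow_succ]
      have hc := Nat.choose_mul_factorial_mul_factorial (show 2 ≤ α m + 2 by omega)
      rw [Nat.add_sub_cancel] at hc
      calc ((α m + 2).choose 2 * ∏ i ∈ Finset.Icc 2 m, (α i).choose (α i - α (i - 1))) *
            (2 ^ ((Finset.Icc 2 m).filter (fun i => α (i - 1) + 2 = α i)).card * 2) *
            (α 1).factorial
          = (α m + 2).choose 2 * 2 *
            ((∏ i ∈ Finset.Icc 2 m, (α i).choose (α i - α (i - 1))) *
              2 ^ ((Finset.Icc 2 m).filter (fun i => α (i - 1) + 2 = α i)).card *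
              (α 1).factorial) := by ring
        _ = (α m + 2).choose 2 * Nat.factorial 2 * (α m).factorial := by
            rw [ih']; rfl
        _ = (α m + 2).factorial := hc
    · rw [if_neg (by omega), ← hα, Nat.add_sub_cancel_left, Nat.choose_one_right,
        Nat.factorial_succ]
      calc ((α m + 1) * ∏ i ∈ Finset.Icc 2 m, (α i).choose (α i - α (i - 1))) *
            2 ^ ((Finset.Icc 2 m).filter (fun i => α (i - 1) + 2 = α i)).card *
            (α 1).factorial
          = (α m + 1) * ((∏ i ∈ Finset.Icc 2 m, (α i).choose (α i - α (i - 1))) *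
              2 ^ ((Finset.Icc 2 m).filter (fun i => α (i - 1) + 2 = α i)).card *
              (α 1).factorial) := by ring
        _ = (α m + 1) * (α m).factorial := by rw [ih']
    · rw [if_neg (by omega), ← hα, Nat.sub_self, Nat.choose_zero_right]
      simpa [mul_one] using ih'

/-- In a Tajima chain with `n ≥ 2`, there are no singletons left at the end. -/
lemma tajima_alpha_one (n : ℕ) (hn : 2 ≤ n) (α : ℕ → ℕ) (β : ℕ → Finset ℕ)
    (h : IsTajimaChain n α β) : α 1 = 0 := by
  have hmem : 1 ∈ β 1 := by
    rcases h.2.2.2 2 le_rfl hn with ⟨-, hb⟩ | ⟨-, v, -, hb⟩ | ⟨-, v, -, w, -, -, hb⟩ <;>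
      simp [hb]
  have hcard := h.2.2.1 1 le_rfl (by omega)
  have : 1 ≤ (β 1).card := Finset.card_pos.mpr ⟨1, hmem⟩
  omega

/-- Under the Tajima coalescent jump chain, where the transition at `i` lineages in which
`k` singletons participate has probability `C(α i, k) / C(i, 2)`, the probability of a
complete realization equals `2^(n - c - 1) / (n - 1)!`, where `c` is the number of
coalescent events joining two singletons. -/
theorem tajima_chain_probability (n : ℕ) (hn : 1 ≤ n) (α : ℕ → ℕ) (β : ℕ → Finset ℕ)
    (h : IsTajimaChain n α β) :
    ∏ i ∈ Finset.Icc 2 n, ((α i).choose (α i - α (i - 1)) : ℚ) / (Nat.choose i 2 : ℚ) =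
      2 ^ (n - ((Finset.Icc 2 n).filter (fun i => α (i - 1) + 2 = α i)).card - 1) /
        (Nat.factorial (n - 1) : ℚ) := by
  rcases eq_or_lt_of_le hn with h1 | h2
  · rw [← h1]
    simp [Finset.Icc_eq_empty (show ¬ (2:ℕ) ≤ 1 by omega)]
  · have hn2 : 2 ≤ n := h2
    set c := ((Finset.Icc 2 n).filter (fun i => α (i - 1) + 2 = α i)).card with hc
    have hcle : c ≤ n - 1 := by
      have := Finset.card_filter_le (Finset.Icc 2 n) (fun i => α (i - 1) + 2 = α i)
      rw [Nat.card_Icc] at this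
      omega
    have hnum := tajima_num_prod n α β h n (by omega) le_rfl
    rw [tajima_alpha_one n hn2 α β h, h.1, Nat.factorial_zero, mul_one] at hnum
    have hden := tajima_den_prod n hn
    have hnumQ : (∏ i ∈ Finset.Icc 2 n, ((α i).choose (α i - α (i - 1)) : ℚ)) * 2 ^ c =
        (Nat.factorial n : ℚ) := by exact_mod_cast hnum
    have hdenQ : (∏ i ∈ Finset.Icc 2 n, (Nat.choose i 2 : ℚ)) * 2 ^ (n - 1) =
        (Nat.factorial n : ℚ) * (Nat.factorial (n - 1) : ℚ) := by exact_mod_cast hden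
    have h2c : (2:ℚ) ^ c ≠ 0 := by positivity
    have h2n : (2:ℚ) ^ (n - 1) ≠ 0 := by positivity
    have hB0 : (∏ i ∈ Finset.Icc 2 n, (Nat.choose i 2 : ℚ)) ≠ 0 := by
      apply Finset.prod_ne_zero_iff.mpr
      intro i hi
      have hi2 : 2 ≤ i := (Finset.mem_Icc.mp hi).1
      exact Nat.cast_ne_zero.mpr (Nat.choose_pos hi2).ne'
    have hfac : ((Nat.factorial (n - 1) : ℕ) : ℚ) ≠ 0 :=
      Nat.cast_ne_zero.mpr (Nat.factorial_pos _).ne'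
    have hnfac : ((Nat.factorial n : ℕ) : ℚ) ≠ 0 :=
      Nat.cast_ne_zero.mpr (Nat.factorial_pos _).ne'
    have hpow : (2:ℚ) ^ (n - 1) = 2 ^ (n - c - 1) * 2 ^ c := by
      rw [← pow_add]
      congr 1
      omega
    rw [Finset.prod_div_distrib]
    rw [div_eq_div_iff hB0 hfac]
    have hA : (∏ i ∈ Finset.Icc 2 n, ((α i).choose (α i - α (i - 1)) : ℚ)) =
        (Nat.factorial n : ℚ) / 2 ^ c := by
      rw [eq_div_iff h2c]; exact hnumQ
    have hB : (∏ i ∈ Finset.Icc 2 n, (Nat.choose i 2 : ℚ)) =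
        (Nat.factorial n : ℚ) * (Nat.factorial (n - 1) : ℚ) / 2 ^ (n - 1) := by
      rw [eq_div_iff h2n]; exact hdenQ
    rw [hA, hB, hpow]
    field_simp
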